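/- Let F, F', B, B' be nonempty compact subsets of L^p(I) (1 ≤ p ≤ ∞) with ‖f‖_p ≤ M_F for all f ∈ F, ‖f‖_p ≤ M_{F'} for all f ∈ F', ‖g‖_p ≤ M_B for all g ∈ B, and ‖g‖_p ≤ M_{B'} for all g ∈ B'. Define F *_T b = {f *_T b : f ∈ F}, f *_T B = {f *_T b : b ∈ B}, and F *_T B = {f *_T b : f ∈ F, b ∈ B}. Then for any f, b ∈ L^p(I) the Hausdorff distances satisfy: d_H(F, F*_T b) ≤ (Λ/(1−Λ))(M_F + ‖b‖_p); d_H(B, f*_T B) ≤ (1/(1−Λ))(M_B + ‖f‖_p); d_H(F, F*_T B) ≤ (Λ/(1−Λ))(M_F + M_B); d_H(B, F*_T B) ≤ (1/(1−Λ))(M_B + M_F); d_H(F*_T B, F'*_T B) ≤ (1/(1−Λ))(M_F + M_{F'}); d_H(F*_T B, F*_T B') ≤ (Λ/(1−Λ))(M_B + M_{B'}); and d_H(F*_T B, F'*_T B') ≤ (1/(1−Λ))((M_F + M_{F'}) + Λ(M_B + M_{B'})). -/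

import Mathlib

open MeasureTheory ENNReal

noncomputable section

/-- The inverse of the increasing affine map `L n` sending `[x 0, x N]` onto
`[x n, x (n+1)]` (so `L n (x 0) = x n.castSucc` and `L n (x N) = x n.succ`). -/
def Linv {N : ℕ} (x : Fin (N + 1) → ℝ) (n : Fin N) (y : ℝ) : ℝ :=
  x 0 + (y - x n.castSucc) * (x (Fin.last N) - x 0) / (x n.succ - x n.castSucc)

/-- The subinterval `I n` of the partition: `[x 0, x 1]` for `n = 0` and
`(x n, x (n+1)]` otherwise. -/
def subInt {N : ℕ} (x : Fin (N + 1) → ℝ) (n : Fin N) : Set ℝ :=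
  if n.val = 0 then Set.Icc (x n.castSucc) (x n.succ)
  else Set.Ioc (x n.castSucc) (x n.succ)

/-- `h` is the image of `g` under the Read–Bajraktarević operator `T_{f,b}` with
scale functions `α`, almost everywhere: on each `I n`,
`h = f + (α n ∘ Lₙ⁻¹) · ((g - b) ∘ Lₙ⁻¹)`. -/
def RBEq {N : ℕ} (μ : Measure ℝ) (x : Fin (N + 1) → ℝ) (α : Fin N → ℝ → ℝ)
    (f b g h : ℝ → ℝ) : Prop :=
  ∀ n : Fin N, ∀ᵐ t ∂μ, t ∈ subInt x n →
    h t = f t + α n (Linv x n t) * (g (Linv x n t) - b (Linv x n t))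

/-- `h` satisfies the self-referential equation of `T_{f,b}`, i.e. `h` is a fixed
point of `T_{f,b}`; `h` is then the fractal convolution `f *_T b`. -/
def SelfRef {N : ℕ} (μ : Measure ℝ) (x : Fin (N + 1) → ℝ) (α : Fin N → ℝ → ℝ)
    (f b h : ℝ → ℝ) : Prop :=
  RBEq μ x α f b h h

namespace FCAux

variable {N : ℕ} {x : Fin (N + 1) → ℝ}

lemma dpos (hx : StrictMono x) (n : Fin N) : 0 < x n.succ - x n.castSucc :=
  sub_pos.2 (hx (Fin.castSucc_lt_succ : n.castSucc < n.succ))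

lemma lpos (hx : StrictMono x) (n : Fin N) : 0 < x (Fin.last N) - x 0 := by
  have h1 : x 0 ≤ x n.castSucc := hx.monotone (Fin.zero_le _)
  have h2 : x n.succ ≤ x (Fin.last N) := hx.monotone (Fin.le_last _)
  have := dpos hx n
  linarith

lemma linv_eq (hx : StrictMono x) (n : Fin N) (t : ℝ) :
    Linv x n t = ((x (Fin.last N) - x 0) / (x n.succ - x n.castSucc)) * t +
      (x 0 - ((x (Fin.last N) - x 0) / (x n.succ - x n.castSucc)) * x n.castSucc) := by
  have hd := (dpos hx n).ne'
  unfold Linv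
  field_simp
  ring

lemma linv_strictMono (hx : StrictMono x) (n : Fin N) : StrictMono (Linv x n) := by
  intro s t hst
  have hd := dpos hx n
  have hl := lpos hx n
  rw [linv_eq hx n, linv_eq hx n]
  have hc : 0 < (x (Fin.last N) - x 0) / (x n.succ - x n.castSucc) := div_pos hl hd
  nlinarith

lemma linv_left (hx : StrictMono x) (n : Fin N) : Linv x n (x n.castSucc) = x 0 := by
  unfold Linv; simp

lemma linv_right (hx : StrictMono x) (n : Fin N) : Linv x n (x n.succ) = x (Fin.last N) := by
  have hd := (dpos hx n).ne'
  unfold Linv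
  field_simp
  ring

lemma linv_preimage_Ioc (hx : StrictMono x) (n : Fin N) :
    (Linv x n) ⁻¹' (Set.Ioc (x 0) (x (Fin.last N)))
      = Set.Ioc (x n.castSucc) (x n.succ) := by
  ext t
  have h := linv_strictMono hx n
  simp only [Set.mem_preimage, Set.mem_Ioc]
  rw [← linv_left hx n, ← linv_right hx n, h.lt_iff_lt, h.le_iff_le]

lemma linv_preimage_Icc (hx : StrictMono x) (n : Fin N) :
    (Linv x n) ⁻¹' (Set.Icc (x 0) (x (Fin.last N)))
      = Set.Icc (x n.castSucc) (x n.succ) := by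
  ext t
  have h := linv_strictMono hx n
  simp only [Set.mem_preimage, Set.mem_Icc]
  rw [← linv_left hx n, ← linv_right hx n, h.le_iff_le, h.le_iff_le]

lemma linv_measurable (hx : StrictMono x) (n : Fin N) : Measurable (Linv x n) := by
  have : Linv x n = fun t => ((x (Fin.last N) - x 0) / (x n.succ - x n.castSucc)) * t +
      (x 0 - ((x (Fin.last N) - x 0) / (x n.succ - x n.castSucc)) * x n.castSucc) := by
    funext t; exact linv_eq hx n t
  rw [this]
  fun_prop

lemma map_linv_volume (hx : StrictMono x) (n : Fin N) :
    Measure.map (Linv x n) volume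
      = ENNReal.ofReal ((x n.succ - x n.castSucc) / (x (Fin.last N) - x 0)) • volume := by
  set c : ℝ := (x (Fin.last N) - x 0) / (x n.succ - x n.castSucc) with hc
  set e : ℝ := x 0 - c * x n.castSucc with he
  have hcpos : 0 < c := div_pos (lpos hx n) (dpos hx n)
  have h1 : Linv x n = (fun t => e + t) ∘ (fun t => c * t) := by
    funext t; simp only [Function.comp]
    rw [linv_eq hx n t, ← hc, ← he]
    ring
  rw [h1, ← Measure.map_map (by fun_prop) (by fun_prop),
    Real.map_volume_mul_left hcpos.ne', Measure.map_smul,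
    map_add_left_eq_self volume e]
  congr 1
  rw [abs_of_pos (by positivity), hc, inv_div]

lemma subInt_subset (hx : StrictMono x) (n : Fin N) :
    subInt x n ⊆ Set.Icc (x 0) (x (Fin.last N)) := by
  have h1 : x 0 ≤ x n.castSucc := hx.monotone (Fin.zero_le _)
  have h2 : x n.succ ≤ x (Fin.last N) := hx.monotone (Fin.le_last _)
  unfold subInt
  split
  · exact Set.Icc_subset_Icc h1 h2
  · exact (Set.Ioc_subset_Icc_self).trans (Set.Icc_subset_Icc h1 h2)

lemma subInt_measurable (n : Fin N) : MeasurableSet (subInt x n) := by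
  unfold subInt; split
  · exact measurableSet_Icc
  · exact measurableSet_Ioc

lemma subInt_eq_preimage (hx : StrictMono x) (n : Fin N) :
    subInt x n = (Linv x n) ⁻¹'
      (if n.val = 0 then Set.Icc (x 0) (x (Fin.last N))
       else Set.Ioc (x 0) (x (Fin.last N))) := by
  unfold subInt
  split
  · rw [linv_preimage_Icc hx n]
  · rw [linv_preimage_Ioc hx n]

lemma map_linv_restrict (hx : StrictMono x) (n : Fin N) :
    Measure.map (Linv x n) (volume.restrict (subInt x n))
      = ENNReal.ofReal ((x n.succ - x n.castSucc) / (x (Fin.last N) - x 0)) •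
        (volume.restrict (Set.Icc (x 0) (x (Fin.last N)))) := by
  set J : Set ℝ := if n.val = 0 then Set.Icc (x 0) (x (Fin.last N))
       else Set.Ioc (x 0) (x (Fin.last N)) with hJ
  have hJm : MeasurableSet J := by
    rw [hJ]; split
    · exact measurableSet_Icc
    · exact measurableSet_Ioc
  have hJr : volume.restrict J = volume.restrict (Set.Icc (x 0) (x (Fin.last N))) := by
    rw [hJ]; split
    · rfl
    · exact Measure.restrict_congr_set Ioc_ae_eq_Icc
  rw [subInt_eq_preimage hx n, ← hJ,
    ← Measure.restrict_map (linv_measurable hx n) hJm, map_linv_volume hx n,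
    Measure.restrict_smul, hJr]

lemma subInt_disjoint (hx : StrictMono x) : Pairwise (Function.onFun Disjoint (subInt x)) := by
  have key : ∀ m n : Fin N, m < n → Disjoint (subInt x m) (subInt x n) := by
    intro m n hmn
    have h1 : subInt x m ⊆ Set.Iic (x m.succ) := by
      unfold subInt; split
      · exact Set.Icc_subset_Iic_self
      · exact Set.Ioc_subset_Iic_self
    have hn0 : ¬ (n.val = 0) := by
      have h := Fin.lt_def.1 hmn
      omega
    have h2 : subInt x n ⊆ Set.Ioi (x n.castSucc) := by
      unfold subInt
      rw [if_neg hn0]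
      exact Set.Ioc_subset_Ioi_self
    have hle : x m.succ ≤ x n.castSucc := by
      apply hx.monotone
      simp only [Fin.le_def, Fin.val_succ, Fin.coe_castSucc]
      omega
    exact ((Set.Iic_disjoint_Ioi hle).mono h1 h2)
  intro m n hmn
  rcases lt_or_gt_of_ne hmn with h | h
  · exact key m n h
  · exact (key n m h).symm

lemma iUnion_subInt (hN : 1 ≤ N) (hx : StrictMono x) :
    (⋃ n : Fin N, subInt x n) = Set.Icc (x 0) (x (Fin.last N)) := by
  have : NeZero N := ⟨by omega⟩
  apply Set.Subset.antisymm
  · exact Set.iUnion_subset fun n => subInt_subset hx n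
  · intro t ht
    obtain ⟨ht0, htN⟩ := ht
    by_cases h0 : t ≤ x ((0 : Fin N).succ)
    · refine Set.mem_iUnion.2 ⟨0, ?_⟩
      unfold subInt
      rw [if_pos (Fin.val_zero N)]
      refine ⟨?_, h0⟩
      simpa using ht0
    · push_neg at h0
      set S : Finset (Fin N) := Finset.univ.filter (fun n => x n.castSucc < t) with hS
      have hSne : S.Nonempty := by
        refine ⟨0, ?_⟩
        simp only [hS, Finset.mem_filter, Finset.mem_univ, true_and]
        calc x (0 : Fin N).castSucc ≤ x ((0 : Fin N).succ) :=
              hx.monotone (Fin.castSucc_lt_succ : (0 : Fin N).castSucc < (0 : Fin N).succ).le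
        _ < t := h0
      set n := S.max' hSne with hn
      have hn1 : x n.castSucc < t := by
        exact (Finset.mem_filter.1 (S.max'_mem hSne)).2
      have hn2 : t ≤ x n.succ := by
        by_contra hc
        push_neg at hc
        by_cases hlt : n.val + 1 < N
        · set n' : Fin N := ⟨n.val + 1, hlt⟩ with hn'
          have hmem : n' ∈ S := by
            simp only [hS, Finset.mem_filter, Finset.mem_univ, true_and]
            have : x n'.castSucc = x n.succ := by
              congr 1
            rw [this]; exact hc
          have := S.le_max' n' hmem
          rw [← hn] at this
          have h2 : n < n' := by
            simp only [hn', Fin.lt_def]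
            omega
          exact absurd this (not_le.2 h2)
        · have hNeq : n.val + 1 = N := by
            have := n.isLt; omega
          have : x n.succ = x (Fin.last N) := by
            congr 1
            simp only [Fin.ext_iff, Fin.val_succ, Fin.val_last]
            exact hNeq
          rw [this] at hc
          exact absurd htN (not_le.2 hc)
      refine Set.mem_iUnion.2 ⟨n, ?_⟩
      unfold subInt
      split
      · exact ⟨hn1.le, hn2⟩
      · exact ⟨hn1, hn2⟩

lemma measure_sum (hN : 1 ≤ N) (hx : StrictMono x) :
    volume.restrict (Set.Icc (x 0) (x (Fin.last N)))
      = Measure.sum (fun n : Fin N => volume.restrict (subInt x n)) := by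
  rw [← iUnion_subInt hN hx]
  exact Measure.restrict_iUnion (subInt_disjoint hx) (fun n => subInt_measurable n)

lemma telescope (hx : StrictMono x) :
    (∑ n : Fin N, (x n.succ - x n.castSucc)) = x (Fin.last N) - x 0 := by
  set g : ℕ → ℝ := fun i => x ⟨min i N, Nat.lt_succ_of_le (min_le_right i N)⟩ with hg
  have h : ∀ n : Fin N, x n.succ - x n.castSucc = g (n.val + 1) - g n.val := by
    intro n
    have h1 : (⟨min (n.val + 1) N, Nat.lt_succ_of_le (min_le_right _ N)⟩ : Fin (N+1)) = n.succ := by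
      have : min (n.val + 1) N = n.val + 1 := by have := n.isLt; omega
      simp [Fin.ext_iff, this]
    have h2 : (⟨min n.val N, Nat.lt_succ_of_le (min_le_right _ N)⟩ : Fin (N+1)) = n.castSucc := by
      have : min n.val N = n.val := by have := n.isLt; omega
      simp [Fin.ext_iff, this]
    rw [hg]
    simp only []
    rw [h1, h2]
  have hN' : g N = x (Fin.last N) := by
    rw [hg]; simp only []
    congr 1
    simp [Fin.ext_iff]
  have h0' : g 0 = x 0 := by
    rw [hg]; simp only []
    congr 1
  calc (∑ n : Fin N, (x n.succ - x n.castSucc))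
      = ∑ n : Fin N, (g (n.val + 1) - g n.val) := Finset.sum_congr rfl fun n _ => h n
    _ = ∑ i ∈ Finset.range N, (g (i + 1) - g i) :=
        Fin.sum_univ_eq_sum_range (fun i => g (i + 1) - g i) N
    _ = g N - g 0 := Finset.sum_range_sub g N
    _ = x (Fin.last N) - x 0 := by rw [hN', h0']

lemma linfty_ae_bound {μ : Measure ℝ} (a : Lp ℝ ∞ μ) :
    ∀ᵐ t ∂μ, ‖(a : ℝ → ℝ) t‖ ≤ ‖a‖ := by
  have h := ae_le_eLpNormEssSup (f := (a : ℝ → ℝ)) (μ := μ)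
  have hfin : eLpNormEssSup (a : ℝ → ℝ) μ ≠ ∞ := by
    rw [← eLpNorm_exponent_top]; exact Lp.eLpNorm_ne_top a
  filter_upwards [h] with t ht
  have h2 : ((‖(a : ℝ → ℝ) t‖₊ : ℝ≥0∞)).toReal ≤ (eLpNormEssSup (a : ℝ → ℝ) μ).toReal :=
    ENNReal.toReal_mono hfin ht
  simpa [Lp.norm_def, eLpNorm_exponent_top] using h2

lemma core (hN : 0 < N) (hx : StrictMono x)
    {μ : Measure ℝ} (hμ : μ = volume.restrict (Set.Icc (x 0) (x (Fin.last N))))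
    (p : ℝ≥0∞) (hp0 : p ≠ 0)
    (α : Fin N → Lp ℝ ∞ μ) (Λ : ℝ) (hΛ : ∀ n, ‖α n‖ ≤ Λ)
    (w u : ℝ → ℝ) (hu : AEStronglyMeasurable u μ)
    (hw : ∀ n : Fin N, ∀ᵐ t ∂μ, t ∈ subInt x n →
      w t = (α n : ℝ → ℝ) (Linv x n t) * u (Linv x n t)) :
    eLpNorm w p μ ≤ ENNReal.ofReal Λ * eLpNorm u p μ := by
  have hΛ0 : 0 ≤ Λ := le_trans (norm_nonneg (α ⟨0, hN⟩)) (hΛ ⟨0, hN⟩)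
  set K := ENNReal.ofReal Λ * eLpNorm u p μ with hK
  have hνμ : ∀ n : Fin N, volume.restrict (subInt x n) = μ.restrict (subInt x n) := by
    intro n
    rw [hμ, Measure.restrict_restrict (subInt_measurable n),
      Set.inter_eq_left.2 (subInt_subset hx n)]
  -- the per-piece bound
  have hstep : ∀ n : Fin N, eLpNorm w p (volume.restrict (subInt x n)) ≤
      (ENNReal.ofReal ((x n.succ - x n.castSucc) / (x (Fin.last N) - x 0))) ^ (1/p).toReal * K := by
    intro n
    have hae : ∀ᵐ t ∂(volume.restrict (subInt x n)),
        w t = ((fun s => (α n : ℝ → ℝ) s * u s) ∘ (Linv x n)) t := by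
      rw [hνμ n]
      filter_upwards [ae_restrict_of_ae (hw n), ae_restrict_mem (subInt_measurable n)]
        with t h1 h2
      exact h1 h2
    rw [eLpNorm_congr_ae hae]
    have hmap := map_linv_restrict hx n
    rw [← hμ] at hmap
    have hr : 0 < (x n.succ - x n.castSucc) / (x (Fin.last N) - x 0) :=
      div_pos (dpos hx n) (lpos hx n)
    have hAESM : AEStronglyMeasurable (fun s => ((α n : Lp ℝ ∞ μ) : ℝ → ℝ) s * u s)
        (Measure.map (Linv x n) (volume.restrict (subInt x n))) := by
      rw [hmap]
      exact ((Lp.aestronglyMeasurable (α n)).mul hu).mono_ac Measure.smul_absolutelyContinuous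
    rw [← eLpNorm_map_measure hAESM (linv_measurable hx n).aemeasurable, hmap,
      eLpNorm_smul_measure_of_ne_zero (ENNReal.ofReal_pos.2 hr).ne']
    rw [smul_eq_mul]
    refine mul_le_mul_right ?_ _
    have hb : ∀ᵐ s ∂μ, ‖(α n : ℝ → ℝ) s * u s‖ ≤ ‖(Λ • u) s‖ := by
      filter_upwards [linfty_ae_bound (α n)] with s hs
      have h1 : ‖(α n : ℝ → ℝ) s * u s‖ = ‖(α n : ℝ → ℝ) s‖ * ‖u s‖ := norm_mul _ _
      have h2 : ‖(Λ • u) s‖ = Λ * ‖u s‖ := by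
        simp [Pi.smul_apply, norm_smul, Real.norm_eq_abs, abs_of_nonneg hΛ0]
      rw [h1, h2]
      exact mul_le_mul_of_nonneg_right (hs.trans (hΛ n)) (norm_nonneg _)
    calc eLpNorm (fun s => (α n : ℝ → ℝ) s * u s) p μ
        ≤ eLpNorm (Λ • u) p μ := eLpNorm_mono_ae hb
      _ = (‖Λ‖₊ : ℝ≥0∞) * eLpNorm u p μ := eLpNorm_const_smul Λ u p μ
      _ = K := by rw [hK, ← Real.enorm_eq_ofReal hΛ0]; rfl
  -- assemble
  have hsum_meas : μ = Measure.sum (fun n : Fin N => volume.restrict (subInt x n)) := by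
    rw [hμ]; exact measure_sum hN hx
  have hgoal : eLpNorm w p (Measure.sum (fun n : Fin N => volume.restrict (subInt x n))) ≤ K := by
    by_cases hptop : p = ∞
    · subst hptop
      rw [eLpNorm_exponent_top, eLpNormEssSup]
      apply essSup_le_of_ae_le K
      refine (Measure.ae_sum_iff (p := fun t => (‖w t‖₊ : ℝ≥0∞) ≤ K)).2 ?_
      intro n
      have h2 : eLpNormEssSup w (volume.restrict (subInt x n)) ≤ K := by
        have h := hstep n
        rw [eLpNorm_exponent_top] at h
        simpa using h
      filter_upwards [ae_le_eLpNormEssSup (f := w) (μ := volume.restrict (subInt x n))]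
        with t ht
      exact le_trans ht h2
    · have hpt : 0 < p.toReal := ENNReal.toReal_pos hp0 hptop
      have h1p : (1/p).toReal = 1/p.toReal := by
        rw [ENNReal.toReal_div, ENNReal.toReal_one]
      have hle : ∀ n : Fin N,
          (∫⁻ t, (‖w t‖₊ : ℝ≥0∞) ^ p.toReal ∂(volume.restrict (subInt x n)))
            ≤ ENNReal.ofReal ((x n.succ - x n.castSucc) / (x (Fin.last N) - x 0)) * K ^ p.toReal := by
        intro n
        have h := hstep n
        rw [eLpNorm_eq_lintegral_rpow_enorm_toReal hp0 hptop] at h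
        have h2 := ENNReal.rpow_le_rpow h hpt.le
        rw [← ENNReal.rpow_mul, one_div, inv_mul_cancel₀ hpt.ne', ENNReal.rpow_one] at h2
        rwa [ENNReal.mul_rpow_of_nonneg _ _ hpt.le, ← ENNReal.rpow_mul, h1p, one_div,
          inv_mul_cancel₀ hpt.ne', ENNReal.rpow_one] at h2
      have hsum : (∑ n : Fin N,
          ENNReal.ofReal ((x n.succ - x n.castSucc) / (x (Fin.last N) - x 0))) = 1 := by
        rw [← ENNReal.ofReal_sum_of_nonneg
          (fun n _ => (div_pos (dpos hx n) (lpos hx n)).le),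
          ← Finset.sum_div, telescope hx, div_self (lpos hx ⟨0, hN⟩).ne', ENNReal.ofReal_one]
      rw [eLpNorm_eq_lintegral_rpow_enorm_toReal hp0 hptop, lintegral_sum_measure, tsum_fintype]
      calc (∑ n : Fin N, ∫⁻ t, (‖w t‖₊ : ℝ≥0∞) ^ p.toReal ∂(volume.restrict (subInt x n)))
            ^ (1/p.toReal)
          ≤ (∑ n : Fin N, ENNReal.ofReal ((x n.succ - x n.castSucc) / (x (Fin.last N) - x 0))
              * K ^ p.toReal) ^ (1/p.toReal) :=
            ENNReal.rpow_le_rpow (Finset.sum_le_sum fun n _ => hle n) (by positivity)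
        _ = ((∑ n : Fin N, ENNReal.ofReal ((x n.succ - x n.castSucc) / (x (Fin.last N) - x 0)))
              * K ^ p.toReal) ^ (1/p.toReal) := by rw [Finset.sum_mul]
        _ = (K ^ p.toReal) ^ (1/p.toReal) := by rw [hsum, one_mul]
        _ = K := by
            rw [← ENNReal.rpow_mul, mul_one_div, div_self hpt.ne', ENNReal.rpow_one]
  calc eLpNorm w p μ
      = eLpNorm w p (Measure.sum (fun n : Fin N => volume.restrict (subInt x n))) := by
        rw [hsum_meas]
    _ ≤ K := hgoal

lemma keyIneq (hN : 0 < N) (hx : StrictMono x)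
    {μ : Measure ℝ} (hμ : μ = volume.restrict (Set.Icc (x 0) (x (Fin.last N))))
    (p : ℝ≥0∞) [Fact (1 ≤ p)]
    (α : Fin N → Lp ℝ ∞ μ) (Λ : ℝ) (hΛ : ∀ n, ‖α n‖ ≤ Λ)
    (f b g h f' b' g' h' : Lp ℝ p μ)
    (H1 : RBEq μ x (fun n => ⇑(α n)) ⇑f ⇑b ⇑g ⇑h)
    (H2 : RBEq μ x (fun n => ⇑(α n)) ⇑f' ⇑b' ⇑g' ⇑h') :
    ‖h - h'‖ ≤ ‖f - f'‖ + Λ * ‖(g - b) - (g' - b')‖ := by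
  have hp0 : p ≠ 0 := (lt_of_lt_of_le zero_lt_one (Fact.out : 1 ≤ p)).ne'
  have hΛ0 : 0 ≤ Λ := le_trans (norm_nonneg (α ⟨0, hN⟩)) (hΛ ⟨0, hN⟩)
  set w : ℝ → ℝ := fun t => ((h : ℝ → ℝ) t - (h' : ℝ → ℝ) t)
    - ((f : ℝ → ℝ) t - (f' : ℝ → ℝ) t) with hwdef
  set u : ℝ → ℝ := fun s => ((g : ℝ → ℝ) s - (b : ℝ → ℝ) s)
    - ((g' : ℝ → ℝ) s - (b' : ℝ → ℝ) s) with hudef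
  have hu : AEStronglyMeasurable u μ :=
    ((Lp.aestronglyMeasurable g).sub (Lp.aestronglyMeasurable b)).sub
      ((Lp.aestronglyMeasurable g').sub (Lp.aestronglyMeasurable b'))
  have hw : ∀ n : Fin N, ∀ᵐ t ∂μ, t ∈ subInt x n →
      w t = (α n : ℝ → ℝ) (Linv x n t) * u (Linv x n t) := by
    intro n
    filter_upwards [H1 n, H2 n] with t e1 e2 ht
    simp only [hwdef, hudef]
    rw [e1 ht, e2 ht]
    ring
  have hcore := core hN hx hμ p hp0 α Λ hΛ w u hu hw
  have hWcoe : (⇑((h - h') - (f - f')) : ℝ → ℝ) =ᵐ[μ] w := by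
    filter_upwards [Lp.coeFn_sub (h - h') (f - f'), Lp.coeFn_sub h h', Lp.coeFn_sub f f']
      with t a1 a2 a3
    simp only [hwdef, a1, Pi.sub_apply, a2, a3]
  have hUcoe : (⇑((g - b) - (g' - b')) : ℝ → ℝ) =ᵐ[μ] u := by
    filter_upwards [Lp.coeFn_sub (g - b) (g' - b'), Lp.coeFn_sub g b, Lp.coeFn_sub g' b']
      with t a1 a2 a3
    simp only [hudef, a1, Pi.sub_apply, a2, a3]
  have hne : ENNReal.ofReal Λ * eLpNorm u p μ ≠ ∞ := by
    refine ENNReal.mul_ne_top ENNReal.ofReal_ne_top ?_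
    rw [← eLpNorm_congr_ae hUcoe]
    exact Lp.eLpNorm_ne_top _
  have hnorm1 : ‖(h - h') - (f - f')‖ ≤ Λ * ‖(g - b) - (g' - b')‖ := by
    rw [Lp.norm_def, Lp.norm_def, eLpNorm_congr_ae hWcoe, eLpNorm_congr_ae hUcoe]
    calc (eLpNorm w p μ).toReal ≤ (ENNReal.ofReal Λ * eLpNorm u p μ).toReal :=
          ENNReal.toReal_mono hne hcore
      _ = Λ * (eLpNorm u p μ).toReal := by
          rw [ENNReal.toReal_mul, ENNReal.toReal_ofReal hΛ0]
  calc ‖h - h'‖ = ‖((h - h') - (f - f')) + (f - f')‖ := by congr 1; abel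
    _ ≤ ‖(h - h') - (f - f')‖ + ‖f - f'‖ := norm_add_le _ _
    _ ≤ Λ * ‖(g - b) - (g' - b')‖ + ‖f - f'‖ := add_le_add_left hnorm1 _
    _ = ‖f - f'‖ + Λ * ‖(g - b) - (g' - b')‖ := by ring

lemma rbeq_triv1 {μ : Measure ℝ} (α : Fin N → ℝ → ℝ) (g b : ℝ → ℝ) :
    RBEq μ x α g b b g := by
  intro n
  filter_upwards with t _
  ring


lemma K1 (hN : 0 < N) (hx : StrictMono x)
    {μ : Measure ℝ} (hμ : μ = volume.restrict (Set.Icc (x 0) (x (Fin.last N))))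
    (p : ℝ≥0∞) [Fact (1 ≤ p)]
    (α : Fin N → Lp ℝ ∞ μ) (Λ : ℝ) (hΛb : ∀ n, ‖α n‖ ≤ Λ) (hΛ1 : Λ < 1)
    (P : Lp ℝ p μ → Lp ℝ p μ → Lp ℝ p μ)
    (hP : ∀ f b : Lp ℝ p μ, SelfRef μ x (fun n => ⇑(α n)) ⇑f ⇑b ⇑(P f b))
    (f b f' b' : Lp ℝ p μ) :
    ‖P f b - P f' b'‖ ≤ 1 / (1 - Λ) * (‖f - f'‖ + Λ * ‖b - b'‖) := by
  have hΛ0 : 0 ≤ Λ := le_trans (norm_nonneg (α ⟨0, hN⟩)) (hΛb ⟨0, hN⟩)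
  have h1Λ : (0 : ℝ) < 1 - Λ := by linarith
  have h := keyIneq hN hx hμ p α Λ hΛb f b (P f b) (P f b) f' b' (P f' b') (P f' b')
    (hP f b) (hP f' b')
  have heq : (P f b - b) - (P f' b' - b') = (P f b - P f' b') - (b - b') := by abel
  rw [heq] at h
  have h2 : ‖(P f b - P f' b') - (b - b')‖ ≤ ‖P f b - P f' b'‖ + ‖b - b'‖ := norm_sub_le _ _
  rw [one_div_mul_eq_div, le_div_iff₀ h1Λ]
  nlinarith [h, h2, norm_nonneg (b - b'), norm_nonneg (P f b - P f' b')]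

lemma K3 (hN : 0 < N) (hx : StrictMono x)
    {μ : Measure ℝ} (hμ : μ = volume.restrict (Set.Icc (x 0) (x (Fin.last N))))
    (p : ℝ≥0∞) [Fact (1 ≤ p)]
    (α : Fin N → Lp ℝ ∞ μ) (Λ : ℝ) (hΛb : ∀ n, ‖α n‖ ≤ Λ) (hΛ1 : Λ < 1)
    (P : Lp ℝ p μ → Lp ℝ p μ → Lp ℝ p μ)
    (hP : ∀ f b : Lp ℝ p μ, SelfRef μ x (fun n => ⇑(α n)) ⇑f ⇑b ⇑(P f b))
    (f b : Lp ℝ p μ) :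
    ‖P f b - b‖ ≤ 1 / (1 - Λ) * (‖f‖ + ‖b‖) := by
  have hΛ0 : 0 ≤ Λ := le_trans (norm_nonneg (α ⟨0, hN⟩)) (hΛb ⟨0, hN⟩)
  have h1Λ : (0 : ℝ) < 1 - Λ := by linarith
  have h := keyIneq hN hx hμ p α Λ hΛb f b (P f b) (P f b) b b b b
    (hP f b) (rbeq_triv1 (fun n => ⇑(α n)) ⇑b ⇑b)
  have heq : (P f b - b) - (b - b) = P f b - b := by abel
  rw [heq] at h
  have h2 : ‖f - b‖ ≤ ‖f‖ + ‖b‖ := norm_sub_le _ _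
  rw [one_div_mul_eq_div, le_div_iff₀ h1Λ]
  nlinarith [h, h2, norm_nonneg (P f b - b)]

lemma K2 (hN : 0 < N) (hx : StrictMono x)
    {μ : Measure ℝ} (hμ : μ = volume.restrict (Set.Icc (x 0) (x (Fin.last N))))
    (p : ℝ≥0∞) [Fact (1 ≤ p)]
    (α : Fin N → Lp ℝ ∞ μ) (Λ : ℝ) (hΛb : ∀ n, ‖α n‖ ≤ Λ) (hΛ1 : Λ < 1)
    (P : Lp ℝ p μ → Lp ℝ p μ → Lp ℝ p μ)
    (hP : ∀ f b : Lp ℝ p μ, SelfRef μ x (fun n => ⇑(α n)) ⇑f ⇑b ⇑(P f b))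
    (g b : Lp ℝ p μ) :
    ‖P g b - g‖ ≤ Λ / (1 - Λ) * (‖g‖ + ‖b‖) := by
  have hΛ0 : 0 ≤ Λ := le_trans (norm_nonneg (α ⟨0, hN⟩)) (hΛb ⟨0, hN⟩)
  have h1Λ : (0 : ℝ) < 1 - Λ := by linarith
  have h := keyIneq hN hx hμ p α Λ hΛb g b (P g b) (P g b) g b b g
    (hP g b) (rbeq_triv1 (fun n => ⇑(α n)) ⇑g ⇑b)
  have heq : (P g b - b) - (b - b) = P g b - b := by abel
  rw [heq, sub_self, norm_zero] at h
  have h3 := K3 hN hx hμ p α Λ hΛb hΛ1 P hP g b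
  calc ‖P g b - g‖ ≤ 0 + Λ * ‖P g b - b‖ := h
    _ = Λ * ‖P g b - b‖ := by ring
    _ ≤ Λ * (1 / (1 - Λ) * (‖g‖ + ‖b‖)) := mul_le_mul_of_nonneg_left h3 hΛ0
    _ = Λ / (1 - Λ) * (‖g‖ + ‖b‖) := by ring

end FCAux

open FCAux

/-- Hausdorff-distance estimates for the convolution sets
`F *_T b`, `f *_T B` and `F *_T B` built from nonempty compact bounded subsets
`F, F', B, B' ⊆ L^p(I)`. -/
theorem hausdorffDist_convolution_sets
    (N : ℕ) (hN : 2 ≤ N) (x : Fin (N + 1) → ℝ) (hx : StrictMono x)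
    (μ : Measure ℝ) (hμ : μ = volume.restrict (Set.Icc (x 0) (x (Fin.last N))))
    (p : ℝ≥0∞) [Fact (1 ≤ p)]
    (α : Fin N → Lp ℝ ∞ μ)
    (Λ : ℝ) (hΛdef : Λ = ⨆ n : Fin N, ‖α n‖) (hΛ : Λ < 1)
    (P : Lp ℝ p μ → Lp ℝ p μ → Lp ℝ p μ)
    (hP : ∀ f b : Lp ℝ p μ, SelfRef μ x (fun n => ⇑(α n)) ⇑f ⇑b ⇑(P f b))
    (F F' B B' : Set (Lp ℝ p μ))
    (hFc : IsCompact F) (hF'c : IsCompact F') (hBc : IsCompact B) (hB'c : IsCompact B')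
    (hFne : F.Nonempty) (hF'ne : F'.Nonempty) (hBne : B.Nonempty) (hB'ne : B'.Nonempty)
    (MF MF' MB MB' : ℝ)
    (hMF : ∀ f ∈ F, ‖f‖ ≤ MF) (hMF' : ∀ f ∈ F', ‖f‖ ≤ MF')
    (hMB : ∀ g ∈ B, ‖g‖ ≤ MB) (hMB' : ∀ g ∈ B', ‖g‖ ≤ MB')
    (f b : Lp ℝ p μ) :
    Metric.hausdorffDist F ((fun g => P g b) '' F) ≤ Λ / (1 - Λ) * (MF + ‖b‖) ∧
    Metric.hausdorffDist B (P f '' B) ≤ 1 / (1 - Λ) * (MB + ‖f‖) ∧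
    Metric.hausdorffDist F (Set.image2 P F B) ≤ Λ / (1 - Λ) * (MF + MB) ∧
    Metric.hausdorffDist B (Set.image2 P F B) ≤ 1 / (1 - Λ) * (MB + MF) ∧
    Metric.hausdorffDist (Set.image2 P F B) (Set.image2 P F' B)
      ≤ 1 / (1 - Λ) * (MF + MF') ∧
    Metric.hausdorffDist (Set.image2 P F B) (Set.image2 P F B')
      ≤ Λ / (1 - Λ) * (MB + MB') ∧
    Metric.hausdorffDist (Set.image2 P F B) (Set.image2 P F' B')
      ≤ 1 / (1 - Λ) * ((MF + MF') + Λ * (MB + MB')) := by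
  have hN0 : 0 < N := by omega
  have hΛb : ∀ n : Fin N, ‖α n‖ ≤ Λ := by
    intro n
    rw [hΛdef]
    exact le_ciSup (f := fun n : Fin N => ‖α n‖) (Set.Finite.bddAbove (Set.finite_range _)) n
  have hΛ0 : 0 ≤ Λ := le_trans (norm_nonneg (α ⟨0, hN0⟩)) (hΛb ⟨0, hN0⟩)
  have h1Λ : (0 : ℝ) < 1 - Λ := by linarith
  have hc1 : (0 : ℝ) ≤ 1 / (1 - Λ) := by positivity
  have hc2 : (0 : ℝ) ≤ Λ / (1 - Λ) := div_nonneg hΛ0 h1Λ.le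
  have hK1 := K1 hN0 hx hμ p α Λ hΛb hΛ P hP
  have hK2 := K2 hN0 hx hμ p α Λ hΛb hΛ P hP
  have hK3 := K3 hN0 hx hμ p α Λ hΛb hΛ P hP
  obtain ⟨f0c, hf0c⟩ := hFne
  obtain ⟨f0c', hf0c'⟩ := hF'ne
  obtain ⟨b0c, hb0c⟩ := hBne
  obtain ⟨b0c', hb0c'⟩ := hB'ne
  have MF0 : 0 ≤ MF := le_trans (norm_nonneg _) (hMF _ hf0c)
  have MF'0 : 0 ≤ MF' := le_trans (norm_nonneg _) (hMF' _ hf0c')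
  have MB0 : 0 ≤ MB := le_trans (norm_nonneg _) (hMB _ hb0c)
  have MB'0 : 0 ≤ MB' := le_trans (norm_nonneg _) (hMB' _ hb0c')
  -- bound for ‖P f1 b1 - P f2 b2‖ in terms of set bounds
  have hPP : ∀ (f1 b1 f2 b2 : Lp ℝ p μ) (A C : ℝ), ‖f1 - f2‖ ≤ A → ‖b1 - b2‖ ≤ C →
      ‖P f1 b1 - P f2 b2‖ ≤ 1 / (1 - Λ) * (A + Λ * C) := by
    intro f1 b1 f2 b2 A C hA hC
    refine (hK1 f1 b1 f2 b2).trans ?_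
    have hC' : Λ * ‖b1 - b2‖ ≤ Λ * C := mul_le_mul_of_nonneg_left hC hΛ0
    exact mul_le_mul_of_nonneg_left (by linarith) hc1
  refine ⟨?_, ?_, ?_, ?_, ?_, ?_, ?_⟩
  · -- d_H(F, F *_T b)
    refine Metric.hausdorffDist_le_of_mem_dist
      (mul_nonneg hc2 (by positivity)) ?_ ?_
    · intro f1 hf1
      refine ⟨P f1 b, Set.mem_image_of_mem _ hf1, ?_⟩
      rw [dist_eq_norm, norm_sub_rev]
      refine (hK2 f1 b).trans ?_
      exact mul_le_mul_of_nonneg_left (by linarith [hMF f1 hf1]) hc2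
    · rintro y ⟨f1, hf1, rfl⟩
      refine ⟨f1, hf1, ?_⟩
      rw [dist_eq_norm]
      refine (hK2 f1 b).trans ?_
      exact mul_le_mul_of_nonneg_left (by linarith [hMF f1 hf1]) hc2
  · -- d_H(B, f *_T B)
    refine Metric.hausdorffDist_le_of_mem_dist
      (mul_nonneg hc1 (by positivity)) ?_ ?_
    · intro b1 hb1
      refine ⟨P f b1, Set.mem_image_of_mem _ hb1, ?_⟩
      rw [dist_eq_norm, norm_sub_rev]
      refine (hK3 f b1).trans ?_
      exact mul_le_mul_of_nonneg_left (by linarith [hMB b1 hb1]) hc1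
    · rintro y ⟨b1, hb1, rfl⟩
      refine ⟨b1, hb1, ?_⟩
      rw [dist_eq_norm]
      refine (hK3 f b1).trans ?_
      exact mul_le_mul_of_nonneg_left (by linarith [hMB b1 hb1]) hc1
  · -- d_H(F, F *_T B)
    refine Metric.hausdorffDist_le_of_mem_dist
      (mul_nonneg hc2 (by positivity)) ?_ ?_
    · intro f1 hf1
      refine ⟨P f1 b0c, Set.mem_image2_of_mem hf1 hb0c, ?_⟩
      rw [dist_eq_norm, norm_sub_rev]
      refine (hK2 f1 b0c).trans ?_
      exact mul_le_mul_of_nonneg_left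
        (by linarith [hMF f1 hf1, hMB b0c hb0c]) hc2
    · rintro y ⟨f1, hf1, b1, hb1, rfl⟩
      refine ⟨f1, hf1, ?_⟩
      rw [dist_eq_norm]
      refine (hK2 f1 b1).trans ?_
      exact mul_le_mul_of_nonneg_left
        (by linarith [hMF f1 hf1, hMB b1 hb1]) hc2
  · -- d_H(B, F *_T B)
    refine Metric.hausdorffDist_le_of_mem_dist
      (mul_nonneg hc1 (by positivity)) ?_ ?_
    · intro b1 hb1
      refine ⟨P f0c b1, Set.mem_image2_of_mem hf0c hb1, ?_⟩
      rw [dist_eq_norm, norm_sub_rev]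
      refine (hK3 f0c b1).trans ?_
      exact mul_le_mul_of_nonneg_left
        (by linarith [hMF f0c hf0c, hMB b1 hb1]) hc1
    · rintro y ⟨f1, hf1, b1, hb1, rfl⟩
      refine ⟨b1, hb1, ?_⟩
      rw [dist_eq_norm]
      refine (hK3 f1 b1).trans ?_
      exact mul_le_mul_of_nonneg_left
        (by linarith [hMF f1 hf1, hMB b1 hb1]) hc1
  · -- d_H(F *_T B, F' *_T B)
    have hbound : ∀ f1 ∈ F, ∀ f2 ∈ F', ∀ b1 : Lp ℝ p μ,
        ‖P f1 b1 - P f2 b1‖ ≤ 1 / (1 - Λ) * (MF + MF') := by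
      intro f1 hf1 f2 hf2 b1
      have := hPP f1 b1 f2 b1 (MF + MF') 0
        (le_trans (norm_sub_le _ _) (add_le_add (hMF f1 hf1) (hMF' f2 hf2)))
        (by rw [sub_self, norm_zero])
      simpa using this
    refine Metric.hausdorffDist_le_of_mem_dist
      (mul_nonneg hc1 (by positivity)) ?_ ?_
    · rintro y ⟨f1, hf1, b1, hb1, rfl⟩
      refine ⟨P f0c' b1, Set.mem_image2_of_mem hf0c' hb1, ?_⟩
      rw [dist_eq_norm]
      exact hbound f1 hf1 f0c' hf0c' b1
    · rintro y ⟨f2, hf2, b1, hb1, rfl⟩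
      refine ⟨P f0c b1, Set.mem_image2_of_mem hf0c hb1, ?_⟩
      rw [dist_eq_norm, norm_sub_rev]
      exact hbound f0c hf0c f2 hf2 b1
  · -- d_H(F *_T B, F *_T B')
    have hbound : ∀ b1 ∈ B, ∀ b2 ∈ B', ∀ f1 : Lp ℝ p μ,
        ‖P f1 b1 - P f1 b2‖ ≤ Λ / (1 - Λ) * (MB + MB') := by
      intro b1 hb1 b2 hb2 f1
      have := hPP f1 b1 f1 b2 0 (MB + MB')
        (by rw [sub_self, norm_zero])
        (le_trans (norm_sub_le _ _) (add_le_add (hMB b1 hb1) (hMB' b2 hb2)))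
      calc ‖P f1 b1 - P f1 b2‖ ≤ 1 / (1 - Λ) * (0 + Λ * (MB + MB')) := this
        _ = Λ / (1 - Λ) * (MB + MB') := by ring
    refine Metric.hausdorffDist_le_of_mem_dist
      (mul_nonneg hc2 (by positivity)) ?_ ?_
    · rintro y ⟨f1, hf1, b1, hb1, rfl⟩
      refine ⟨P f1 b0c', Set.mem_image2_of_mem hf1 hb0c', ?_⟩
      rw [dist_eq_norm]
      exact hbound b1 hb1 b0c' hb0c' f1
    · rintro y ⟨f1, hf1, b2, hb2, rfl⟩
      refine ⟨P f1 b0c, Set.mem_image2_of_mem hf1 hb0c, ?_⟩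
      rw [dist_eq_norm, norm_sub_rev]
      exact hbound b0c hb0c b2 hb2 f1
  · -- d_H(F *_T B, F' *_T B')
    have hbound : ∀ f1 ∈ F, ∀ f2 ∈ F', ∀ b1 ∈ B, ∀ b2 ∈ B',
        ‖P f1 b1 - P f2 b2‖ ≤ 1 / (1 - Λ) * ((MF + MF') + Λ * (MB + MB')) := by
      intro f1 hf1 f2 hf2 b1 hb1 b2 hb2
      exact hPP f1 b1 f2 b2 (MF + MF') (MB + MB')
        (le_trans (norm_sub_le _ _) (add_le_add (hMF f1 hf1) (hMF' f2 hf2)))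
        (le_trans (norm_sub_le _ _) (add_le_add (hMB b1 hb1) (hMB' b2 hb2)))
    refine Metric.hausdorffDist_le_of_mem_dist
      (mul_nonneg hc1 (by positivity)) ?_ ?_
    · rintro y ⟨f1, hf1, b1, hb1, rfl⟩
      refine ⟨P f0c' b0c', Set.mem_image2_of_mem hf0c' hb0c', ?_⟩
      rw [dist_eq_norm]
      exact hbound f1 hf1 f0c' hf0c' b1 hb1 b0c' hb0c'
    · rintro y ⟨f2, hf2, b2, hb2, rfl⟩
      refine ⟨P f0c b0c, Set.mem_image2_of_mem hf0c hb0c, ?_⟩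
      rw [dist_eq_norm, norm_sub_rev]
      exact hbound f0c hf0c f2 hf2 b0c hb0c b2 hb2


end
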